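/- Suppose: (i) for all x, y ∈ ℝ^d and t ∈ [0,T], 2⟨Px − Py, A_t⁻ F(t,x) − A_t⁻ F(t,y)⟩ + (p₁ − 1) |A_t⁻ G(t,x) − A_t⁻ G(t,y)|² ≤ L₁ |x − y|²; (ii) V̂ : [0,T] × ℝ^d → ℝ^d satisfies A_t V̂(t,x) + R F(t, x + V̂(t,x)) = 0 for all (t,x) and |V̂(t,x) − V̂(t,y)| ≤ L̂ |x − y| for all t, x, y. Define f(t,x) := A_t⁻ F(t, x + V̂(t,x)) and g(t,x) := A_t⁻ G(t, x + V̂(t,x)). Then for all x, y ∈ ℝ^d and t ∈ [0,T]: 2⟨x − y, f(t,x) − f(t,y)⟩ + (p₁ − 1) |g(t,x) − g(t,y)|² ≤ 2 L₁ (1 + L̂²) |x − y|². -/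
import Mathlib


open Matrix

/-- Euclidean norm of a vector in `ℝ^d`. -/
noncomputable def vnorm {d : ℕ} (x : Fin d → ℝ) : ℝ :=
  Real.sqrt (∑ i, (x i) ^ 2)

/-- Euclidean inner product on `ℝ^d`. -/
def vdot {d : ℕ} (x y : Fin d → ℝ) : ℝ := ∑ i, x i * y i

/-- Frobenius norm of a real matrix: `|B| = sqrt (trace (Bᵀ * B))`. -/
noncomputable def mnorm {d m : ℕ} (B : Matrix (Fin d) (Fin m) ℝ) : ℝ :=
  Real.sqrt ((Bᵀ * B).trace)

lemma vdot_mulVec_left {d : ℕ} (M : Matrix (Fin d) (Fin d) ℝ) (u v : Fin d → ℝ) :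
    vdot (M.mulVec u) v = vdot u (Mᵀ.mulVec v) := by
  show (M *ᵥ u) ⬝ᵥ v = u ⬝ᵥ (Mᵀ *ᵥ v)
  rw [dotProduct_comm, dotProduct_mulVec, ← mulVec_transpose, dotProduct_comm]

lemma vnorm_eq {d : ℕ} (x : Fin d → ℝ) :
    vnorm x = ‖(WithLp.equiv 2 (Fin d → ℝ)).symm x‖ := by
  rw [EuclideanSpace.norm_eq]
  simp [vnorm, sq_abs]

lemma vnorm_nonneg {d : ℕ} (x : Fin d → ℝ) : 0 ≤ vnorm x := Real.sqrt_nonneg _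

lemma vnorm_add_le {d : ℕ} (x y : Fin d → ℝ) : vnorm (x + y) ≤ vnorm x + vnorm y := by
  simp only [vnorm_eq]
  rw [show (WithLp.equiv 2 (Fin d → ℝ)).symm (x + y)
      = (WithLp.equiv 2 (Fin d → ℝ)).symm x + (WithLp.equiv 2 (Fin d → ℝ)).symm y from rfl]
  exact norm_add_le _ _

theorem stmt8 (T : ℝ) (hT : 0 < T) (d m : ℕ) (hd : 1 ≤ d) (hm : 1 ≤ m)
    (L1 p1 Lhat : ℝ) (hL1 : 0 < L1) (hp1 : 1 < p1) (hLhat : 0 < Lhat)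
    (A Am : ℝ → Matrix (Fin d) (Fin d) ℝ)
    -- `Am t` is the Moore–Penrose pseudoinverse of `A t`
    (hPI : ∀ t ∈ Set.Icc (0:ℝ) T, A t * Am t * A t = A t ∧ Am t * A t * Am t = Am t ∧
      (A t * Am t)ᵀ = A t * Am t ∧ (Am t * A t)ᵀ = Am t * A t)
    (F : ℝ → (Fin d → ℝ) → Fin d → ℝ)
    (G : ℝ → (Fin d → ℝ) → Matrix (Fin d) (Fin m) ℝ)
    -- (i) coupled monotonicity condition, with `P = A_t⁻ A_t`
    (hmono : ∀ t ∈ Set.Icc (0:ℝ) T, ∀ x y : Fin d → ℝ,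
      2 * vdot ((Am t * A t).mulVec x - (Am t * A t).mulVec y)
          ((Am t).mulVec (F t x) - (Am t).mulVec (F t y)) +
        (p1 - 1) * mnorm (Am t * G t x - Am t * G t y) ^ 2 ≤
        L1 * vnorm (x - y) ^ 2)
    (V : ℝ → (Fin d → ℝ) → Fin d → ℝ)
    -- (ii) `A_t V̂(t,x) + R F(t, x + V̂(t,x)) = 0` with `R = I − A_t A_t⁻`
    (hveq : ∀ t ∈ Set.Icc (0:ℝ) T, ∀ x : Fin d → ℝ,
      (A t).mulVec (V t x) + (1 - A t * Am t).mulVec (F t (x + V t x)) = 0)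
    -- (ii) `|V̂(t,x) − V̂(t,y)| ≤ L̂ |x − y|`
    (hlip : ∀ t ∈ Set.Icc (0:ℝ) T, ∀ x y : Fin d → ℝ,
      vnorm (V t x - V t y) ≤ Lhat * vnorm (x - y)) :
    -- with `f(t,x) = A_t⁻ F(t, x + V̂(t,x))` and `g(t,x) = A_t⁻ G(t, x + V̂(t,x))`
    ∀ t ∈ Set.Icc (0:ℝ) T, ∀ x y : Fin d → ℝ,
      2 * vdot (x - y)
          ((Am t).mulVec (F t (x + V t x)) - (Am t).mulVec (F t (y + V t y))) +
        (p1 - 1) * mnorm (Am t * G t (x + V t x) - Am t * G t (y + V t y)) ^ 2 ≤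
        2 * L1 * (1 + Lhat ^ 2) * vnorm (x - y) ^ 2 := by
  intro t ht x y
  obtain ⟨h1, h2, h3, h4⟩ := hPI t ht
  set xb := x + V t x with hxb
  set yb := y + V t y with hyb
  -- P := Am t * A t kills V t z
  have hPV : ∀ z : Fin d → ℝ, (Am t * A t).mulVec (V t z) = 0 := by
    intro z
    have h := congrArg (fun v => (Am t).mulVec v) (hveq t ht z)
    simp only [Matrix.mulVec_add, Matrix.mulVec_mulVec, Matrix.mulVec_zero] at h
    have hz : Am t * (1 - A t * Am t) = 0 := by
      rw [mul_sub, mul_one, ← mul_assoc, h2, sub_self]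
    rw [hz, Matrix.zero_mulVec, add_zero] at h
    exact h
  -- P fixes Am t *ᵥ u
  have hPAm : ∀ u : Fin d → ℝ, (Am t * A t).mulVec ((Am t).mulVec u) = (Am t).mulVec u := by
    intro u
    rw [Matrix.mulVec_mulVec, mul_assoc, ← mul_assoc, h2]
  set w := (Am t).mulVec (F t xb) - (Am t).mulVec (F t yb) with hw
  have hPw : (Am t * A t).mulVec w = w := by
    rw [hw, Matrix.mulVec_sub, hPAm, hPAm]
  -- key inner product identity
  have hkey : vdot ((Am t * A t).mulVec xb - (Am t * A t).mulVec yb) w = vdot (x - y) w := by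
    have h5 : (Am t * A t).mulVec xb - (Am t * A t).mulVec yb
        = (Am t * A t).mulVec (x - y) := by
      rw [hxb, hyb, Matrix.mulVec_add, Matrix.mulVec_add, hPV, hPV, add_zero, add_zero,
        ← Matrix.mulVec_sub]
    rw [h5, vdot_mulVec_left, h4, hPw]
  have hmx := hmono t ht xb yb
  rw [hkey] at hmx
  refine le_trans hmx ?_
  -- norm estimate
  have hnorm : vnorm (xb - yb) ≤ (1 + Lhat) * vnorm (x - y) := by
    have h6 : xb - yb = (x - y) + (V t x - V t y) := by
      rw [hxb, hyb]; abel
    rw [h6]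
    calc vnorm ((x - y) + (V t x - V t y)) ≤ vnorm (x - y) + vnorm (V t x - V t y) :=
          vnorm_add_le _ _
      _ ≤ vnorm (x - y) + Lhat * vnorm (x - y) := by
          linarith [hlip t ht x y]
      _ = (1 + Lhat) * vnorm (x - y) := by ring
  have hnn := vnorm_nonneg (xb - yb)
  have hnn2 := vnorm_nonneg (x - y)
  have hsq : vnorm (xb - yb) ^ 2 ≤ (1 + Lhat) ^ 2 * vnorm (x - y) ^ 2 := by
    have := mul_self_le_mul_self hnn hnorm
    nlinarith
  nlinarith [mul_le_mul_of_nonneg_left hsq hL1.le,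
    mul_nonneg (mul_nonneg hL1.le (sq_nonneg (1 - Lhat))) (sq_nonneg (vnorm (x - y)))]
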